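/- Let p be a prime, n ≥ 1, I ⊆ {0,1,...,p−1}, let x_0 < x_1 < ... < x_{p^n−1} be the p^n fixed points of the n-fold iterate g_{p,I}^n, and let α be a generator of the multiplicative group of the finite field F_{p^n}. Define B_{α,I} on the fixed points by B_{α,I}(x_k) = 0 for the unique k with π_{p^n,I}(k) = 0, and B_{α,I}(x_k) = α^{π_{p^n,I}(k)} for all other k. Then B_{α,I} is a bijection from {x ∈ [0,1] : g_{p,I}^n(x) = x} onto F_{p^n}, and (B_{α,I}(x_k))^p = B_{α,I}(g_{p,I}(x_k)) for every 0 ≤ k ≤ p^n − 1. -/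

import Mathlib

/-- The (not necessarily continuous) piecewise linear map `g_{p,I} : [0,1] → [0,1]`:
on `[k/p, (k+1)/p)` it is `x ↦ p·x − k` if `k ∈ I` and `x ↦ k + 1 − p·x` if `k ∉ I`,
with `g_{p,I}(1) = 1` if `p − 1 ∈ I` and `g_{p,I}(1) = 0` otherwise. -/
noncomputable def gpI (p : ℕ) (I : Finset ℕ) (x : ℝ) : ℝ :=
  if x = 1 then (if p - 1 ∈ I then 1 else 0)
  else if (⌊(p : ℝ) * x⌋).toNat ∈ I then (p : ℝ) * x - (⌊(p : ℝ) * x⌋).toNat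
  else ((⌊(p : ℝ) * x⌋).toNat : ℝ) + 1 - (p : ℝ) * x

/-- `I_{p^n}` is the set of indices `k < p^n` such that the `n`-fold iterate of `g_{p,I}`
is increasing on `(k/p^n, (k+1)/p^n)`, where it is given by `x ↦ p^n·x − k`. -/
def ISet (p : ℕ) (I : Finset ℕ) (n : ℕ) : Set ℕ :=
  {k | k < p ^ n ∧ ∀ x ∈ Set.Ioo ((k : ℝ) / (p : ℝ) ^ n) (((k : ℝ) + 1) / (p : ℝ) ^ n),
    (gpI p I)^[n] x = (p : ℝ) ^ n * x - (k : ℝ)}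

/-- The permutation `π_{p^n, I}` of `{0, …, p^n − 1}`: `π_{p^1,I}` is the identity, and for
`a·p^{n−1} ≤ k < (a+1)·p^{n−1}`, `π_{p^n,I}(k) = a·p^{n−1} + π_{p^{n−1},I}(k − a·p^{n−1})`
if `a ∈ I`, and `π_{p^n,I}(k) = a·p^{n−1} + π_{p^{n−1},I}(p^{n−1} − (k − a·p^{n−1}) − 1)`
if `a ∉ I`. -/
def piPowI (p : ℕ) (I : Finset ℕ) : ℕ → ℕ → ℕ
  | 0, k => k
  | n + 1, k =>
    if k / p ^ n ∈ I then k / p ^ n * p ^ n + piPowI p I n (k % p ^ n)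
    else k / p ^ n * p ^ n + piPowI p I n (p ^ n - k % p ^ n - 1)

namespace BAI

variable (p : ℕ) (I : Finset ℕ)

def iota : ℕ → ℕ → ℕ
  | 0, j => j
  | n + 1, j =>
    if j / p ^ n ∈ I then j / p ^ n * p ^ n + iota n (j % p ^ n)
    else j / p ^ n * p ^ n + (p ^ n - 1 - iota n (j % p ^ n))

def sflip : ℕ → ℕ → Bool
  | 0, _ => true
  | n + 1, j => if j / p ^ n ∈ I then sflip n (j % p ^ n) else !sflip n (j % p ^ n)

def rotL (p : ℕ) (n j : ℕ) : ℕ := j % p ^ (n - 1) * p + j / p ^ (n - 1)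

variable {p I}

lemma iota_lt (hp : 1 ≤ p) : ∀ n j, j < p ^ n → iota p I n j < p ^ n := by
  intro n
  induction n with
  | zero => intro j hj; exact hj
  | succ n ih =>
    intro j hj
    have hpn : 1 ≤ p ^ n := Nat.one_le_pow _ _ hp
    have ha : j / p ^ n < p := Nat.div_lt_of_lt_mul (by rw [pow_succ] at hj; omega)
    have hrec := ih (j % p ^ n) (Nat.mod_lt _ (by omega))
    have h1 : j / p ^ n * p ^ n + p ^ n ≤ p ^ n * p := by
      calc j / p ^ n * p ^ n + p ^ n = (j / p ^ n + 1) * p ^ n := by ring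
      _ ≤ p * p ^ n := Nat.mul_le_mul_right _ (by omega)
      _ = p ^ n * p := by ring
    rw [iota, pow_succ]
    split <;> omega

lemma piPowI_lt (hp : 1 ≤ p) : ∀ n k, k < p ^ n → piPowI p I n k < p ^ n := by
  intro n
  induction n with
  | zero => intro k hk; exact hk
  | succ n ih =>
    intro k hk
    have hpn : 1 ≤ p ^ n := Nat.one_le_pow _ _ hp
    have ha : k / p ^ n < p := Nat.div_lt_of_lt_mul (by rw [pow_succ] at hk; omega)
    have hrec := ih (k % p ^ n) (Nat.mod_lt _ (by omega))
    have hb : p ^ n - k % p ^ n - 1 < p ^ n := by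
      generalize p ^ n = P at hpn ⊢; omega
    have hrec2 := ih (p ^ n - k % p ^ n - 1) hb
    have h1 : k / p ^ n * p ^ n + p ^ n ≤ p ^ n * p := by
      calc k / p ^ n * p ^ n + p ^ n = (k / p ^ n + 1) * p ^ n := by ring
      _ ≤ p * p ^ n := Nat.mul_le_mul_right _ (by omega)
      _ = p ^ n * p := by ring
    rw [piPowI, pow_succ]
    split <;> omega

lemma div_add_mul_pow (a r P : ℕ) (hr : r < P) : (a * P + r) / P = a ∧ (a * P + r) % P = r := by
  have hP : 0 < P := by omega
  constructor
  · rw [mul_comm, Nat.mul_add_div hP, Nat.div_eq_of_lt hr, add_zero]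
  · rw [mul_comm, Nat.mul_add_mod, Nat.mod_eq_of_lt hr]

lemma pi_iota (hp : 1 ≤ p) : ∀ n j, j < p ^ n → piPowI p I n (iota p I n j) = j := by
  intro n
  induction n with
  | zero => intro j hj; rfl
  | succ n ih =>
    intro j hj
    have hpn : 1 ≤ p ^ n := Nat.one_le_pow _ _ hp
    have hjm : j % p ^ n < p ^ n := Nat.mod_lt _ (by omega)
    have hlt := iota_lt (I := I) hp n (j % p ^ n) hjm
    rw [iota]
    by_cases hI : j / p ^ n ∈ I
    · rw [if_pos hI, piPowI]
      obtain ⟨hd, hm⟩ := div_add_mul_pow (j / p ^ n) (iota p I n (j % p ^ n)) (p ^ n) hlt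
      rw [hd, hm, if_pos hI, ih _ hjm]
      rw [mul_comm]; exact Nat.div_add_mod j (p ^ n)
    · rw [if_neg hI, piPowI]
      have hb : p ^ n - 1 - iota p I n (j % p ^ n) < p ^ n := by
        generalize p ^ n = P at hpn ⊢; omega
      obtain ⟨hd, hm⟩ := div_add_mul_pow (j / p ^ n) (p ^ n - 1 - iota p I n (j % p ^ n)) (p ^ n) hb
      rw [hd, hm, if_neg hI]
      have heq : p ^ n - (p ^ n - 1 - iota p I n (j % p ^ n)) - 1 = iota p I n (j % p ^ n) := by
        generalize p ^ n = P at hpn hlt ⊢; omega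
      rw [heq, ih _ hjm]
      rw [mul_comm]; exact Nat.div_add_mod j (p ^ n)

lemma iota_pi (hp : 1 ≤ p) : ∀ n k, k < p ^ n → iota p I n (piPowI p I n k) = k := by
  intro n
  induction n with
  | zero => intro k hk; rfl
  | succ n ih =>
    intro k hk
    have hpn : 1 ≤ p ^ n := Nat.one_le_pow _ _ hp
    have hkm : k % p ^ n < p ^ n := Nat.mod_lt _ (by omega)
    rw [piPowI]
    by_cases hI : k / p ^ n ∈ I
    · rw [if_pos hI, iota]
      have hlt := piPowI_lt (I := I) hp n (k % p ^ n) hkm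
      obtain ⟨hd, hm⟩ := div_add_mul_pow (k / p ^ n) (piPowI p I n (k % p ^ n)) (p ^ n) hlt
      rw [hd, hm, if_pos hI, ih _ hkm]
      rw [mul_comm]; exact Nat.div_add_mod k (p ^ n)
    · rw [if_neg hI, iota]
      have hb2 : p ^ n - k % p ^ n - 1 < p ^ n := by
        generalize p ^ n = P at hpn ⊢; omega
      have hlt := piPowI_lt (I := I) hp n (p ^ n - k % p ^ n - 1) hb2
      obtain ⟨hd, hm⟩ := div_add_mul_pow (k / p ^ n) (piPowI p I n (p ^ n - k % p ^ n - 1)) (p ^ n) hlt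
      rw [hd, hm, if_neg hI, ih _ hb2]
      have heq : p ^ n - 1 - (p ^ n - k % p ^ n - 1) = k % p ^ n := by
        generalize p ^ n = P at hpn hkm ⊢; omega
      rw [heq, mul_comm]; exact Nat.div_add_mod k (p ^ n)


lemma sflip_bot (hp : 1 ≤ p) :
    ∀ n j, j < p ^ (n + 1) →
      sflip p I (n + 1) j = if j % p ∈ I then sflip p I n (j / p) else !sflip p I n (j / p) := by
  intro n
  induction n with
  | zero =>
    intro j hj
    rw [pow_one] at hj
    simp [sflip, Nat.mod_eq_of_lt hj, Nat.div_eq_of_lt hj, Nat.mod_one]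
  | succ n ih =>
    intro j hj
    have hp1 : 0 < p := hp
    have hpn : 0 < p ^ (n+1) := Nat.pow_pos hp1
    have ht : j % p ^ (n+1) < p ^ (n+1) := Nat.mod_lt _ hpn
    have e1 : j % p ^ (n + 1) % p = j % p :=
      Nat.mod_mod_of_dvd _ (dvd_pow_self p (Nat.succ_ne_zero n))
    have e2 : j / p / p ^ n = j / p ^ (n + 1) := by
      rw [Nat.div_div_eq_div_mul, ← pow_succ']
    have e3 : j / p % p ^ n = j % p ^ (n + 1) / p := by
      rw [pow_succ']
      exact (Nat.mod_mul_right_div_self j p (p ^ n)).symm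
    have LHS : sflip p I (n + 2) j =
        if j / p ^ (n+1) ∈ I then sflip p I (n+1) (j % p ^ (n+1))
        else !sflip p I (n+1) (j % p ^ (n+1)) := rfl
    rw [LHS, ih _ ht, sflip, e1, e2, e3]
    by_cases h1 : j / p ^ (n+1) ∈ I <;> by_cases h2 : j % p ∈ I <;> simp [h1, h2]

lemma iota_bot (hp : 1 ≤ p) :
    ∀ n j, j < p ^ (n + 1) →
      iota p I (n + 1) j = p * iota p I n (j / p) +
        (if sflip p I n (j / p) then j % p else p - 1 - j % p) := by
  intro n
  induction n with
  | zero =>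
    intro j hj
    rw [pow_one] at hj
    simp [iota, sflip, Nat.mod_eq_of_lt hj, Nat.div_eq_of_lt hj, Nat.mod_one]
  | succ n ih =>
    intro j hj
    have hp1 : 0 < p := hp
    have hpn : 0 < p ^ n := Nat.pow_pos hp1
    have hpn1 : 0 < p ^ (n+1) := Nat.pow_pos hp1
    have ht : j % p ^ (n+1) < p ^ (n+1) := Nat.mod_lt _ hpn1
    have e1 : j % p ^ (n + 1) % p = j % p :=
      Nat.mod_mod_of_dvd _ (dvd_pow_self p (Nat.succ_ne_zero n))
    have e2 : j / p / p ^ n = j / p ^ (n + 1) := by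
      rw [Nat.div_div_eq_div_mul, ← pow_succ']
    have e3 : j / p % p ^ n = j % p ^ (n + 1) / p := by
      rw [pow_succ']
      exact (Nat.mod_mul_right_div_self j p (p ^ n)).symm
    have htp : j % p ^ (n+1) / p < p ^ n := by
      rw [← e3]; exact Nat.mod_lt _ hpn
    have hX : iota p I n (j % p ^ (n+1) / p) < p ^ n := iota_lt (I := I) hp n _ htp
    have hc : j % p < p := Nat.mod_lt _ hp1
    have LHS : iota p I (n + 2) j =
        if j / p ^ (n+1) ∈ I then j / p ^ (n+1) * p ^ (n+1) + iota p I (n+1) (j % p ^ (n+1))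
        else j / p ^ (n+1) * p ^ (n+1) + (p ^ (n+1) - 1 - iota p I (n+1) (j % p ^ (n+1))) := rfl
    have RHSiota : iota p I (n+1) (j / p) =
        if j / p ^ (n+1) ∈ I then j / p ^ (n+1) * p ^ n + iota p I n (j % p ^ (n+1) / p)
        else j / p ^ (n+1) * p ^ n + (p ^ n - 1 - iota p I n (j % p ^ (n+1) / p)) := by
      rw [iota, e2, e3]
    have RHSsflip : sflip p I (n+1) (j / p) =
        if j / p ^ (n+1) ∈ I then sflip p I n (j % p ^ (n+1) / p)
        else !sflip p I n (j % p ^ (n+1) / p) := by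
      rw [sflip, e2, e3]
    rw [LHS, ih _ ht, e1, RHSiota, RHSsflip]
    set a := j / p ^ (n+1) with ha
    set X := iota p I n (j % p ^ (n+1) / p) with hXdef
    set S := sflip p I n (j % p ^ (n+1) / p) with hS
    set c := j % p with hcdef
    by_cases h1 : a ∈ I <;> by_cases h2 : S = true <;>
      simp only [h1, h2, if_pos, if_neg, if_true, if_false, Bool.not_true, Bool.not_false,
        Bool.false_eq_true, not_false_iff, ite_true, ite_false]
    · rw [pow_succ]; ring
    · rw [pow_succ]; ring
    · -- a ∈ I is false, S = true
      have hb : p * X + c ≤ p ^ (n+1) - 1 := by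
        have : p * X + c + 1 ≤ p * p ^ n := by
          calc p * X + c + 1 ≤ p * X + p := by omega
          _ = p * (X + 1) := by ring
          _ ≤ p * p ^ n := Nat.mul_le_mul_left _ (by omega)
        rw [pow_succ']; omega
      zify [hp, hb, hX.le, Nat.le_sub_one_of_lt hX, Nat.one_le_iff_ne_zero.mpr hpn1.ne', Nat.one_le_iff_ne_zero.mpr hpn.ne', hc.le, Nat.le_sub_one_of_lt hc]
      rw [pow_succ]; ring
    · have hb : p * X + (p - 1 - c) ≤ p ^ (n+1) - 1 := by
        have : p * X + (p - 1 - c) + 1 ≤ p * p ^ n := by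
          calc p * X + (p - 1 - c) + 1 ≤ p * X + p := by omega
          _ = p * (X + 1) := by ring
          _ ≤ p * p ^ n := Nat.mul_le_mul_left _ (by omega)
        rw [pow_succ']; omega
      zify [hp, hb, hX.le, Nat.le_sub_one_of_lt hX, Nat.one_le_iff_ne_zero.mpr hpn1.ne', Nat.one_le_iff_ne_zero.mpr hpn.ne', hc.le, Nat.le_sub_one_of_lt hc]
      rw [pow_succ]; ring


lemma rotL_succ (p m j : ℕ) : rotL p (m+1) j = j % p ^ m * p + j / p ^ m := by
  simp [rotL]

lemma rot_lt (hp : 1 ≤ p) {m j : ℕ} (hj : j < p ^ (m+1)) : rotL p (m+1) j < p ^ (m+1) := by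
  have hpm : 0 < p ^ m := Nat.pow_pos hp
  have hmod : j % p ^ m < p ^ m := Nat.mod_lt _ hpm
  have hq : j / p ^ m < p := Nat.div_lt_of_lt_mul (by rw [← pow_succ]; exact hj)
  rw [rotL_succ, pow_succ]
  calc j % p ^ m * p + j / p ^ m < j % p ^ m * p + p := by omega
  _ = (j % p ^ m + 1) * p := by ring
  _ ≤ p ^ m * p := Nat.mul_le_mul_right _ (Nat.succ_le_of_lt hmod)

lemma rot_zero (p m : ℕ) : rotL p m 0 = 0 := by simp [rotL]

lemma rot_eq_zero (hp : 1 ≤ p) {m j : ℕ} (hj : j < p ^ (m+1)) (h : rotL p (m+1) j = 0) :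
    j = 0 := by
  have hpm : 0 < p ^ m := Nat.pow_pos hp
  rw [rotL_succ] at h
  have h1 : j % p ^ m * p = 0 ∧ j / p ^ m = 0 := Nat.add_eq_zero.mp h
  have h2 : j % p ^ m = 0 := by
    rcases Nat.mul_eq_zero.mp h1.1 with h' | h'
    · exact h'
    · omega
  have h3 := Nat.div_add_mod j (p ^ m)
  rw [h1.2, h2] at h3
  simpa using h3.symm

lemma sflip_rot (hp : 1 ≤ p) {m j : ℕ} (hj : j < p ^ (m+1)) :
    sflip p I (m+1) (rotL p (m+1) j) = sflip p I (m+1) j := by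
  have hpm : 0 < p ^ m := Nat.pow_pos hp
  have ha : j / p ^ m < p := Nat.div_lt_of_lt_mul (by rw [← pow_succ]; exact hj)
  have e1 : rotL p (m+1) j % p = j / p ^ m := by
    rw [rotL_succ, add_comm, Nat.add_mul_mod_self_right, Nat.mod_eq_of_lt ha]
  have e2 : rotL p (m+1) j / p = j % p ^ m := by
    rw [rotL_succ, add_comm, Nat.add_mul_div_right _ _ (by omega : 0 < p),
      Nat.div_eq_of_lt ha, zero_add]
  rw [sflip_bot hp m _ (rot_lt hp hj), e1, e2]
  rfl

lemma rot_step (hp : 1 ≤ p) (e i j : ℕ) (hj : j < p ^ (e+i+1)) :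
    rotL p (e+i+1) (j % p ^ (e+1) * p ^ i + j / p ^ (e+1)) =
      j % p ^ e * p ^ (i+1) + j / p ^ e := by
  have hP : 0 < p ^ e := Nat.pow_pos hp
  have hPi : 0 < p ^ i := Nat.pow_pos hp
  have hPe1 : 0 < p ^ (e+1) := Nat.pow_pos hp
  set u := j % p ^ (e+1) with hu
  set q := j / p ^ (e+1) with hqd
  have hulr : u < p ^ (e+1) := Nat.mod_lt _ hPe1
  have hq : q < p ^ i := by
    apply Nat.div_lt_of_lt_mul
    rw [← pow_add, show e + 1 + i = e + i + 1 from by omega]; exact hj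
  set b := u / p ^ e with hbd
  set u' := u % p ^ e with hu'd
  have hu' : u' < p ^ e := Nat.mod_lt _ hP
  have hudecomp : u = b * p ^ e + u' := by
    rw [hbd, hu'd, mul_comm]; exact (Nat.div_add_mod u (p ^ e)).symm
  have hr : u' * p ^ i + q < p ^ e * p ^ i := by
    calc u' * p ^ i + q < u' * p ^ i + p ^ i := by omega
    _ = (u' + 1) * p ^ i := by ring
    _ ≤ p ^ e * p ^ i := Nat.mul_le_mul_right _ (Nat.succ_le_of_lt hu')
  have hc : u * p ^ i + q = b * p ^ (e+i) + (u' * p ^ i + q) := by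
    rw [hudecomp, pow_add]; ring
  obtain ⟨hdiv, hmod⟩ := div_add_mul_pow b (u' * p ^ i + q) (p ^ (e+i)) (by rw [pow_add]; exact hr)
  have e4 : e + i + 1 - 1 = e + i := rfl
  have hju' : j % p ^ e = u' := by
    rw [hu'd, hu]
    exact (Nat.mod_mod_of_dvd j (pow_dvd_pow p (by omega))).symm
  have hjd : j / p ^ e = q * p + b := by
    have hb2 : j / p ^ e % p = b := by
      rw [hbd, hu, pow_succ]
      exact (Nat.mod_mul_right_div_self j (p ^ e) p).symm
    have hq2 : j / p ^ e / p = q := by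
      rw [hqd, Nat.div_div_eq_div_mul, ← pow_succ]
    have h5 := Nat.div_add_mod (j / p ^ e) p
    rw [hq2, hb2] at h5
    rw [← h5]; ring
  rw [rotL, e4, hc, hdiv, hmod, hju', hjd, pow_succ]
  ring


noncomputable def xst (p : ℕ) (I : Finset ℕ) (n j : ℕ) : ℝ :=
  if sflip p I n j then (iota p I n j : ℝ) / ((p:ℝ) ^ n - 1)
  else ((iota p I n j : ℝ) + 1) / ((p:ℝ) ^ n + 1)

lemma gpI_eval (p : ℕ) (I : Finset ℕ) {x : ℝ} (hx : x ≠ 1) {a : ℕ}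
    (h1 : (a:ℝ) ≤ (p:ℝ) * x) (h2 : (p:ℝ) * x < (a:ℝ) + 1) :
    gpI p I x = if a ∈ I then (p:ℝ) * x - (a:ℝ) else (a:ℝ) + 1 - (p:ℝ) * x := by
  have hf : ⌊(p:ℝ) * x⌋ = (a:ℤ) := by
    rw [Int.floor_eq_iff]
    constructor
    · exact_mod_cast h1
    · push_cast; exact h2
  rw [gpI, if_neg hx, hf]
  simp

set_option maxHeartbeats 1000000 in
lemma mal (hp : 2 ≤ p) {m j : ℕ} (hj : j < p ^ (m+1)) :
    gpI p I (xst p I (m+1) j) = xst p I (m+1) (rotL p (m+1) j) := by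
  have hp1 : 1 ≤ p := by omega
  have hP : 0 < p ^ m := Nat.pow_pos hp1
  have hPn : 0 < p ^ (m+1) := Nat.pow_pos hp1
  have hps : p ^ (m+1) = p * p ^ m := by rw [pow_succ]; ring
  set a := j / p ^ m with hadef
  set t := j % p ^ m with htdef
  have ha : a < p := Nat.div_lt_of_lt_mul (by rw [← pow_succ]; exact hj)
  have ht : t < p ^ m := Nat.mod_lt _ hP
  set R := iota p I m t with hRdef
  set u := sflip p I m t with hudef
  have hR : R < p ^ m := iota_lt (I := I) hp1 m t ht
  have hiota : iota p I (m+1) j =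
      if a ∈ I then a * p ^ m + R else a * p ^ m + (p ^ m - 1 - R) := rfl
  have hs : sflip p I (m+1) j = if a ∈ I then u else !u := rfl
  have hrotlt : rotL p (m+1) j < p ^ (m+1) := rot_lt hp1 hj
  have e1 : rotL p (m+1) j % p = a := by
    rw [rotL_succ, add_comm, Nat.add_mul_mod_self_right, Nat.mod_eq_of_lt ha]
  have e2 : rotL p (m+1) j / p = t := by
    rw [rotL_succ, add_comm, Nat.add_mul_div_right _ _ (by omega : 0 < p),
      Nat.div_eq_of_lt ha, zero_add]
  have hrot_iota : iota p I (m+1) (rotL p (m+1) j) =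
      p * R + (if u then a else p - 1 - a) := by
    rw [iota_bot hp1 m _ hrotlt, e1, e2]
  have hrot_sflip : sflip p I (m+1) (rotL p (m+1) j) = sflip p I (m+1) j :=
    sflip_rot hp1 hj
  obtain ⟨b, hb⟩ : ∃ b, a + b + 1 = p := ⟨p - a - 1, by omega⟩
  have hbeq : p - 1 - a = b := by omega
  obtain ⟨r, hr⟩ : ∃ r, R + r + 1 = p ^ m := ⟨p ^ m - R - 1, by omega⟩
  have hreq : p ^ m - 1 - R = r := by omega
  have hrlt : r < p ^ m := by omega
  -- real facts
  have hpR : (2:ℝ) ≤ (p:ℝ) := by exact_mod_cast hp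
  have hPpos : (0:ℝ) < (p:ℝ) ^ m := by positivity
  have hone : (1:ℝ) < (p:ℝ) ^ (m+1) := by
    have : (1:ℝ) < (p:ℝ) := by linarith
    exact one_lt_pow₀ this (Nat.succ_ne_zero m)
  have hDp : (0:ℝ) < (p:ℝ) ^ (m+1) - 1 := by linarith
  have hDm : (0:ℝ) < (p:ℝ) ^ (m+1) + 1 := by linarith
  have hpow : ((p:ℝ)) ^ (m+1) = (p:ℝ) * (p:ℝ) ^ m := by rw [pow_succ]; ring
  have haR : ((a:ℝ)) + 1 ≤ (p:ℝ) := by exact_mod_cast ha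
  have haR0 : (0:ℝ) ≤ (a:ℝ) := Nat.cast_nonneg a
  have hRR : ((R:ℝ)) + 1 ≤ (p:ℝ) ^ m := by exact_mod_cast hR
  have hRR0 : (0:ℝ) ≤ (R:ℝ) := Nat.cast_nonneg R
  have hrR : ((r:ℝ)) + 1 ≤ (p:ℝ) ^ m := by exact_mod_cast hrlt
  have hrR0 : (0:ℝ) ≤ (r:ℝ) := Nat.cast_nonneg r
  have hbR : ((a:ℝ)) + (b:ℝ) + 1 = (p:ℝ) := by exact_mod_cast hb
  have hrRe : ((R:ℝ)) + (r:ℝ) + 1 = (p:ℝ) ^ m := by exact_mod_cast hr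
  have hp0 : (0:ℝ) < (p:ℝ) := by linarith
  have hpRpos : (0:ℝ) ≤ (p:ℝ) * R := by positivity
  have hD1 : ((p:ℝ) * (p:ℝ) ^ m - 1) ≠ 0 := by rw [← hpow]; exact hDp.ne'
  have hD2 : ((p:ℝ) * (p:ℝ) ^ m + 1) ≠ 0 := by rw [← hpow]; exact hDm.ne'
  have hprpos : (0:ℝ) ≤ (p:ℝ) * r := by positivity
  rw [xst, xst, hrot_iota, hrot_sflip, hs, hiota, hbeq, hreq]
  by_cases haI : a ∈ I
  · by_cases hu2 : u = true
    · -- Case 1 : branch increasing, orientation +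
      simp only [haI, hu2, if_true, ite_true]
      by_cases hk : a * p ^ m + R = p ^ (m+1) - 1
      · have ha2 : a = p - 1 := by
          have h1 : p * p ^ m ≤ a * p ^ m + p ^ m := by
            rw [hps] at hk; omega
          have h1' : p * p ^ m ≤ (a + 1) * p ^ m := by
            calc p * p ^ m ≤ a * p ^ m + p ^ m := h1
            _ = (a + 1) * p ^ m := by ring
          have h2 : p ≤ a + 1 := Nat.le_of_mul_le_mul_right h1' hP
          omega
        have hR2 : R = p ^ m - 1 := by
          have hPP : (p - 1) * p ^ m + p ^ m = p * p ^ m := by zify [hp1]; ring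
          rw [ha2, hps] at hk; omega
        have hx1 : ((a * p ^ m + R : ℕ) : ℝ) / ((p:ℝ) ^ (m+1) - 1) = 1 := by
          rw [hk, Nat.cast_sub (by omega : 1 ≤ p ^ (m+1))]
          push_cast
          field_simp
        rw [hx1, gpI, if_pos rfl, if_pos (by rwa [← ha2])]
        have hk2 : p * R + a = p ^ (m+1) - 1 := by
          have hPP : p * (p ^ m - 1) + p = p * p ^ m := by
            zify [Nat.one_le_iff_ne_zero.mpr hP.ne']; ring
          rw [ha2, hR2, hps]; omega
        rw [hk2, Nat.cast_sub (by omega : 1 ≤ p ^ (m+1))]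
        push_cast
        field_simp
      · -- interior increasing fixed point
        have hkle : a * p ^ m + R + 2 ≤ p ^ (m+1) := by
          have h1 : a * p ^ m + p ^ m ≤ p * p ^ m := by
            calc a * p ^ m + p ^ m = (a+1) * p ^ m := by ring
            _ ≤ p * p ^ m := Nat.mul_le_mul_right _ ha
          rw [hps] at hk ⊢; omega
        have hstrict : p * R + a + 2 ≤ p ^ (m+1) := by
          by_cases hRtop : R = p ^ m - 1
          · have hPP : (p - 1) * p ^ m + p ^ m = p * p ^ m := by zify [hp1]; ring
            have h1 : a * p ^ m < (p-1) * p ^ m := by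
              rw [hps] at hkle; omega
            have h2 : a < p - 1 := lt_of_mul_lt_mul_right h1 (Nat.zero_le _)
            have hPP2 : p * (p ^ m - 1) + p = p * p ^ m := by
              zify [Nat.one_le_iff_ne_zero.mpr hP.ne']; ring
            rw [hRtop, hps]
            omega
          · have h1 : p * (R + 2) ≤ p * p ^ m := Nat.mul_le_mul_left _ (by omega)
            have h1' : p * R + 2 * p ≤ p * p ^ m := by
              calc p * R + 2 * p = p * (R + 2) := by ring
              _ ≤ p * p ^ m := h1
            rw [hps]
            omega
        have hcast : ((a * p ^ m + R : ℕ) : ℝ) = a * (p:ℝ) ^ m + R := by push_cast; ring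
        set x := ((a * p ^ m + R : ℕ) : ℝ) / ((p:ℝ) ^ (m+1) - 1) with hxdef
        have hkleR : (a:ℝ) * (p:ℝ) ^ m + R + 2 ≤ (p:ℝ) ^ (m+1) := by exact_mod_cast hkle
        have hstrictR : (p:ℝ) * R + a + 2 ≤ (p:ℝ) ^ (m+1) := by exact_mod_cast hstrict
        have hxlt : x < 1 := by
          rw [hxdef, div_lt_one hDp, hcast]; linarith
        rw [hpow] at hstrictR
        have h1 : (a:ℝ) ≤ (p:ℝ) * x := by
          rw [hxdef, mul_div_assoc', le_div_iff₀ hDp, hcast, hpow]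
          linarith
        have h2 : (p:ℝ) * x < (a:ℝ) + 1 := by
          rw [hxdef, mul_div_assoc', div_lt_iff₀ hDp, hcast, hpow]
          linarith
        rw [gpI_eval p I (ne_of_lt hxlt) h1 h2, if_pos haI, hxdef, hcast]
        push_cast
        rw [hpow]
        field_simp [hD1]
        ring
    · -- Case 2 : branch increasing, orientation −
      have hu3 : u = false := by simpa using hu2
      simp only [haI, hu3, if_true, ite_false, Bool.false_eq_true]
      have hkle : a * p ^ m + R + 1 ≤ p ^ (m+1) := by
        have h1 : a * p ^ m + p ^ m ≤ p * p ^ m := by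
          calc a * p ^ m + p ^ m = (a+1) * p ^ m := by ring
          _ ≤ p * p ^ m := Nat.mul_le_mul_right _ ha
        rw [hps]; omega
      have hcast : ((a * p ^ m + R : ℕ) : ℝ) = a * (p:ℝ) ^ m + R := by push_cast; ring
      set x := (((a * p ^ m + R : ℕ) : ℝ) + 1) / ((p:ℝ) ^ (m+1) + 1) with hxdef
      have hkleR : (a:ℝ) * (p:ℝ) ^ m + R + 1 ≤ (p:ℝ) ^ (m+1) := by exact_mod_cast hkle
      have hxlt : x < 1 := by
        rw [hxdef, div_lt_one hDm, hcast]; linarith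
      have hple : (p:ℝ) * (R + 1) ≤ (p:ℝ) * ((p:ℝ) ^ m) :=
        mul_le_mul_of_nonneg_left hRR (le_of_lt hp0)
      have h1 : (a:ℝ) ≤ (p:ℝ) * x := by
        rw [hxdef, mul_div_assoc', le_div_iff₀ hDm, hcast, hpow]
        nlinarith [hpRpos, haR, hp0]
      have h2 : (p:ℝ) * x < (a:ℝ) + 1 := by
        rw [hxdef, mul_div_assoc', div_lt_iff₀ hDm, hcast, hpow]
        nlinarith [hple, haR0]
      rw [gpI_eval p I (ne_of_lt hxlt) h1 h2, if_pos haI, hxdef, hcast]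
      push_cast
      rw [hpow]
      have hbR2 : (b:ℝ) = (p:ℝ) - a - 1 := by linarith
      rw [hbR2]
      field_simp [hD2]
      ring
  · by_cases hu2 : u = true
    · -- Case 4 : branch decreasing, orientation − overall
      simp only [haI, hu2, if_false, ite_true, ite_false, Bool.not_true, Bool.false_eq_true]
      have hcast : ((a * p ^ m + r : ℕ) : ℝ) = a * (p:ℝ) ^ m + r := by push_cast; ring
      have hkle : a * p ^ m + r + 1 ≤ p ^ (m+1) := by
        have h1 : a * p ^ m + p ^ m ≤ p * p ^ m := by
          calc a * p ^ m + p ^ m = (a+1) * p ^ m := by ring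
          _ ≤ p * p ^ m := Nat.mul_le_mul_right _ ha
        rw [hps]; omega
      set x := (((a * p ^ m + r : ℕ) : ℝ) + 1) / ((p:ℝ) ^ (m+1) + 1) with hxdef
      have hkleR : (a:ℝ) * (p:ℝ) ^ m + r + 1 ≤ (p:ℝ) ^ (m+1) := by exact_mod_cast hkle
      have hxlt : x < 1 := by
        rw [hxdef, div_lt_one hDm, hcast]; linarith
      have hple : (p:ℝ) * (r + 1) ≤ (p:ℝ) * ((p:ℝ) ^ m) :=
        mul_le_mul_of_nonneg_left hrR (le_of_lt hp0)
      have h1 : (a:ℝ) ≤ (p:ℝ) * x := by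
        rw [hxdef, mul_div_assoc', le_div_iff₀ hDm, hcast, hpow]
        nlinarith [hprpos, haR, hp0]
      have h2 : (p:ℝ) * x < (a:ℝ) + 1 := by
        rw [hxdef, mul_div_assoc', div_lt_iff₀ hDm, hcast, hpow]
        nlinarith [hple, haR0]
      rw [gpI_eval p I (ne_of_lt hxlt) h1 h2, if_neg haI, hxdef, hcast]
      push_cast
      rw [hpow]
      have hrR2 : (r:ℝ) = (p:ℝ) ^ m - R - 1 := by linarith
      rw [hrR2]
      field_simp [hD2]
      ring
    · -- Case 3 : branch decreasing, orientation + overall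
      have hu3 : u = false := by simpa using hu2
      simp only [haI, hu3, if_false, ite_true, ite_false, Bool.not_false, Bool.false_eq_true]
      by_cases hk : a * p ^ m + r = p ^ (m+1) - 1
      · have ha2 : a = p - 1 := by
          have h1 : p * p ^ m ≤ a * p ^ m + p ^ m := by
            rw [hps] at hk; omega
          have h1' : p * p ^ m ≤ (a + 1) * p ^ m := by
            calc p * p ^ m ≤ a * p ^ m + p ^ m := h1
            _ = (a + 1) * p ^ m := by ring
          have h2 : p ≤ a + 1 := Nat.le_of_mul_le_mul_right h1' hP
          omega
        have hr2 : r = p ^ m - 1 := by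
          have hPP : (p - 1) * p ^ m + p ^ m = p * p ^ m := by zify [hp1]; ring
          rw [ha2, hps] at hk; omega
        have hR0 : R = 0 := by omega
        have hb0 : b = 0 := by omega
        have hx1 : ((a * p ^ m + r : ℕ) : ℝ) / ((p:ℝ) ^ (m+1) - 1) = 1 := by
          rw [hk, Nat.cast_sub (by omega : 1 ≤ p ^ (m+1))]
          push_cast
          field_simp
        rw [hx1, gpI, if_pos rfl, if_neg (by rwa [← ha2])]
        rw [hR0, hb0]
        norm_num
      · have hkle : a * p ^ m + r + 2 ≤ p ^ (m+1) := by
          have h1 : a * p ^ m + p ^ m ≤ p * p ^ m := by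
            calc a * p ^ m + p ^ m = (a+1) * p ^ m := by ring
            _ ≤ p * p ^ m := Nat.mul_le_mul_right _ ha
          rw [hps] at hk ⊢; omega
        have hstrict : p * r + a + 2 ≤ p ^ (m+1) := by
          by_cases hRtop : r = p ^ m - 1
          · have hPP : (p - 1) * p ^ m + p ^ m = p * p ^ m := by zify [hp1]; ring
            have h1 : a * p ^ m < (p-1) * p ^ m := by
              rw [hps] at hkle; omega
            have h2 : a < p - 1 := lt_of_mul_lt_mul_right h1 (Nat.zero_le _)
            have hPP2 : p * (p ^ m - 1) + p = p * p ^ m := by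
              zify [Nat.one_le_iff_ne_zero.mpr hP.ne']; ring
            rw [hRtop, hps]
            omega
          · have h1 : p * (r + 2) ≤ p * p ^ m := Nat.mul_le_mul_left _ (by omega)
            have h1' : p * r + 2 * p ≤ p * p ^ m := by
              calc p * r + 2 * p = p * (r + 2) := by ring
              _ ≤ p * p ^ m := h1
            rw [hps]
            omega
        have hcast : ((a * p ^ m + r : ℕ) : ℝ) = a * (p:ℝ) ^ m + r := by push_cast; ring
        set x := ((a * p ^ m + r : ℕ) : ℝ) / ((p:ℝ) ^ (m+1) - 1) with hxdef
        have hkleR : (a:ℝ) * (p:ℝ) ^ m + r + 2 ≤ (p:ℝ) ^ (m+1) := by exact_mod_cast hkle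
        have hstrictR : (p:ℝ) * r + a + 2 ≤ (p:ℝ) ^ (m+1) := by exact_mod_cast hstrict
        have hxlt : x < 1 := by
          rw [hxdef, div_lt_one hDp, hcast]; linarith
        rw [hpow] at hstrictR
        have h1 : (a:ℝ) ≤ (p:ℝ) * x := by
          rw [hxdef, mul_div_assoc', le_div_iff₀ hDp, hcast, hpow]
          linarith
        have h2 : (p:ℝ) * x < (a:ℝ) + 1 := by
          rw [hxdef, mul_div_assoc', div_lt_iff₀ hDp, hcast, hpow]
          linarith
        rw [gpI_eval p I (ne_of_lt hxlt) h1 h2, if_neg haI, hxdef, hcast]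
        push_cast
        rw [hpow]
        have hbR2 : (b:ℝ) = (p:ℝ) - a - 1 := by linarith
        have hrR2 : (r:ℝ) = (p:ℝ) ^ m - R - 1 := by linarith
        rw [hbR2, hrR2]
        field_simp [hD1]
        ring

lemma mid_lt (hp1 : 1 ≤ p) (e i j : ℕ) (hj : j < p ^ (e+i+1)) :
    j % p ^ (e+1) * p ^ i + j / p ^ (e+1) < p ^ (e+i+1) := by
  have hPi : 0 < p ^ i := Nat.pow_pos hp1
  have hPe : 0 < p ^ (e+1) := Nat.pow_pos hp1
  have hu : j % p ^ (e+1) < p ^ (e+1) := Nat.mod_lt _ hPe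
  have hq : j / p ^ (e+1) < p ^ i := by
    apply Nat.div_lt_of_lt_mul
    rw [← pow_add, show e + 1 + i = e + i + 1 from by omega]; exact hj
  calc j % p ^ (e+1) * p ^ i + j / p ^ (e+1)
      < j % p ^ (e+1) * p ^ i + p ^ i := by omega
  _ = (j % p ^ (e+1) + 1) * p ^ i := by ring
  _ ≤ p ^ (e+1) * p ^ i := Nat.mul_le_mul_right _ (Nat.succ_le_of_lt hu)
  _ = p ^ (e+i+1) := by rw [← pow_add]; congr 1; omega

lemma iter_xst (hp : 2 ≤ p) {m j : ℕ} (hj : j < p ^ (m+1)) :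
    ∀ i, i ≤ m+1 → (gpI p I)^[i] (xst p I (m+1) j) =
      xst p I (m+1) (j % p ^ (m+1-i) * p ^ i + j / p ^ (m+1-i)) := by
  intro i
  induction i with
  | zero =>
    intro _
    simp [Nat.mod_eq_of_lt hj, Nat.div_eq_of_lt hj]
  | succ i ih =>
    intro hi
    have hi' : i ≤ m + 1 := by omega
    have him : i ≤ m := by omega
    have he1 : m + 1 - i = (m - i) + 1 := by omega
    have he2 : m + 1 - (i+1) = m - i := by omega
    have he3 : m - i + i + 1 = m + 1 := by omega
    have hj' : j < p ^ ((m-i)+i+1) := by rwa [he3]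
    have hmid : j % p ^ ((m-i)+1) * p ^ i + j / p ^ ((m-i)+1) < p ^ (m+1) := by
      have := mid_lt (by omega : 1 ≤ p) (m-i) i j hj'
      rwa [he3] at this
    rw [Function.iterate_succ_apply', ih hi', he1,
      mal hp hmid]
    congr 1
    have := rot_step (by omega : 1 ≤ p) (m-i) i j hj'
    rw [he3] at this
    rw [this, he2]

lemma xst_fixed (hp : 2 ≤ p) {m j : ℕ} (hj : j < p ^ (m+1)) :
    (gpI p I)^[m+1] (xst p I (m+1) j) = xst p I (m+1) j := by
  have h := iter_xst (I := I) hp hj (m+1) le_rfl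
  simp only [Nat.sub_self, pow_zero, Nat.mod_one, Nat.div_one, zero_mul] at h
  simpa using h

lemma xst_bounds (hp : 2 ≤ p) {m j : ℕ} (hj : j < p ^ (m+1)) :
    ((iota p I (m+1) j : ℝ)) / (p:ℝ) ^ (m+1) ≤ xst p I (m+1) j ∧
    xst p I (m+1) j ≤ ((iota p I (m+1) j : ℝ) + 1) / (p:ℝ) ^ (m+1) ∧
    (iota p I (m+1) j + 1 < p ^ (m+1) →
      xst p I (m+1) j < ((iota p I (m+1) j : ℝ) + 1) / (p:ℝ) ^ (m+1)) := by
  have hp1 : 1 ≤ p := by omega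
  have hklt : iota p I (m+1) j < p ^ (m+1) := iota_lt (I := I) hp1 (m+1) j hj
  set k := iota p I (m+1) j with hkdef
  have hpR : (2:ℝ) ≤ (p:ℝ) := by exact_mod_cast hp
  have hone : (1:ℝ) < (p:ℝ) ^ (m+1) := by
    have : (1:ℝ) < (p:ℝ) := by linarith
    exact one_lt_pow₀ this (Nat.succ_ne_zero m)
  have hPpos : (0:ℝ) < (p:ℝ) ^ (m+1) := by positivity
  have hDp : (0:ℝ) < (p:ℝ) ^ (m+1) - 1 := by linarith
  have hDm : (0:ℝ) < (p:ℝ) ^ (m+1) + 1 := by linarith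
  have hK0 : (0:ℝ) ≤ (k:ℝ) := Nat.cast_nonneg k
  have hKlt : (k:ℝ) + 1 ≤ (p:ℝ) ^ (m+1) := by exact_mod_cast hklt
  rw [xst]
  split
  · refine ⟨?_, ?_, ?_⟩
    · rw [div_le_div_iff₀ hPpos hDp]
      nlinarith
    · rw [div_le_div_iff₀ hDp hPpos]
      nlinarith
    · intro hlt
      have hKlt' : (k:ℝ) + 1 < (p:ℝ) ^ (m+1) := by exact_mod_cast hlt
      rw [div_lt_div_iff₀ hDp hPpos]
      nlinarith
  · refine ⟨?_, ?_, ?_⟩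
    · rw [div_le_div_iff₀ hPpos hDm]
      nlinarith
    · rw [div_le_div_iff₀ hDm hPpos]
      nlinarith
    · intro hlt
      rw [div_lt_div_iff₀ hDm hPpos]
      nlinarith

end BAI

/-- Theorem: with `x_0 < x_1 < ⋯ < x_{p^n−1}` the fixed points of `g_{p,I}^n` and `α` a
generator of the multiplicative group of `F_{p^n}`, the map `B_{α,I}` sending the fixed
point `x_k` with `π_{p^n,I}(k) = 0` to `0` and `x_k` to `α^{π_{p^n,I}(k)}` otherwise is
a bijection onto `F_{p^n}` satisfying `(B_{α,I}(x_k))^p = B_{α,I}(g_{p,I}(x_k))` for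
every fixed point `x_k`. -/
theorem bijection_B_alpha_I (p n : ℕ) [Fact p.Prime] (hn : 1 ≤ n)
    (I : Finset ℕ) (hI : ∀ i ∈ I, i < p)
    (x : ℕ → ℝ) (hmono : StrictMonoOn x (Set.Iio (p ^ n)))
    (himg : x '' Set.Iio (p ^ n) = {y ∈ Set.Icc (0 : ℝ) 1 | (gpI p I)^[n] y = y})
    (α : (GaloisField p n)ˣ) (hα : ∀ β : (GaloisField p n)ˣ, β ∈ Subgroup.zpowers α)
    (B : ℝ → GaloisField p n)
    (hB0 : ∀ k < p ^ n, piPowI p I n k = 0 → B (x k) = 0)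
    (hBk : ∀ k < p ^ n, piPowI p I n k ≠ 0 →
      B (x k) = (α : GaloisField p n) ^ piPowI p I n k) :
    Set.BijOn B {y ∈ Set.Icc (0 : ℝ) 1 | (gpI p I)^[n] y = y} Set.univ ∧
    ∀ k < p ^ n, B (x k) ^ p = B (gpI p I (x k)) := by
  obtain ⟨m, rfl⟩ : ∃ m, n = m + 1 := ⟨n - 1, by omega⟩
  have hp2 : 2 ≤ p := (Fact.out : p.Prime).two_le
  have hp1 : 1 ≤ p := by omega
  have hNpos : 0 < p ^ (m+1) := Nat.pow_pos hp1
  have hN2 : 2 ≤ p ^ (m+1) := le_trans hp2 (Nat.le_self_pow (Nat.succ_ne_zero m) p)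
  set S := {y ∈ Set.Icc (0 : ℝ) 1 | (gpI p I)^[m+1] y = y} with hSdef
  set xx : ℕ → ℝ := fun k => BAI.xst p I (m+1) (piPowI p I (m+1) k) with hxxdef
  have hpilt : ∀ k, k < p ^ (m+1) → piPowI p I (m+1) k < p ^ (m+1) :=
    fun k hk => BAI.piPowI_lt (I := I) hp1 _ k hk
  have hiotapi : ∀ k, k < p ^ (m+1) → BAI.iota p I (m+1) (piPowI p I (m+1) k) = k :=
    fun k hk => BAI.iota_pi (I := I) hp1 _ k hk
  have hpR : (2:ℝ) ≤ (p:ℝ) := by exact_mod_cast hp2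
  have hPpos : (0:ℝ) < (p:ℝ) ^ (m+1) := by positivity
  have hxxb : ∀ k, k < p ^ (m+1) →
      (k:ℝ)/(p:ℝ)^(m+1) ≤ xx k ∧ xx k ≤ ((k:ℝ)+1)/(p:ℝ)^(m+1) ∧
      (k + 1 < p ^ (m+1) → xx k < ((k:ℝ)+1)/(p:ℝ)^(m+1)) := by
    intro k hk
    have h := BAI.xst_bounds (I := I) hp2 (hpilt k hk)
    rw [hiotapi k hk] at h
    exact h
  have hxxmono : StrictMonoOn xx (Set.Iio (p ^ (m+1))) := by
    intro k1 h1 k2 h2 hlt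
    simp only [Set.mem_Iio] at h1 h2
    have b1 := hxxb k1 h1
    have b2 := hxxb k2 h2
    have hstep : ((k1:ℝ)+1)/(p:ℝ)^(m+1) ≤ (k2:ℝ)/(p:ℝ)^(m+1) := by
      gcongr
      exact_mod_cast Nat.succ_le_of_lt hlt
    exact lt_of_lt_of_le (b1.2.2 (by omega)) (le_trans hstep b2.1)
  have hxxmem : ∀ k, k < p ^ (m+1) → xx k ∈ S := by
    intro k hk
    have b := hxxb k hk
    refine Set.mem_sep ⟨?_, ?_⟩ ?_
    · have h0 : (0:ℝ) ≤ (k:ℝ)/(p:ℝ)^(m+1) := by positivity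
      linarith [b.1]
    · have h1 : ((k:ℝ)+1)/(p:ℝ)^(m+1) ≤ 1 := by
        rw [div_le_one hPpos]
        exact_mod_cast Nat.succ_le_of_lt hk
      linarith [b.2.1]
    · exact BAI.xst_fixed hp2 (hpilt k hk)
  have hSx : S = x '' Set.Iio (p ^ (m+1)) := himg.symm
  have hIiofin : (Set.Iio (p ^ (m+1))).Finite := Set.finite_Iio _
  have hSfin : S.Finite := hSx ▸ hIiofin.image x
  have hIiocard : (Set.Iio (p ^ (m+1))).ncard = p ^ (m+1) := by
    rw [← Finset.coe_range, Set.ncard_coe_finset, Finset.card_range]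
  have hxinj : Set.InjOn x (Set.Iio (p ^ (m+1))) := hmono.injOn
  have hScard : S.ncard = p ^ (m+1) := by
    rw [hSx, Set.ncard_image_of_injOn hxinj, hIiocard]
  have hxximg : xx '' Set.Iio (p ^ (m+1)) = S := by
    apply Set.eq_of_subset_of_ncard_le
    · rintro y ⟨k, hk, rfl⟩; exact hxxmem k hk
    · rw [Set.ncard_image_of_injOn hxxmono.injOn, hIiocard, hScard]
    · exact hSfin
  have hxeq : ∀ k, k < p ^ (m+1) → x k = xx k := by
    intro k hk
    have hf : StrictMono (fun i : Fin (p ^ (m+1)) => x i.val) := fun i j hij =>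
      hmono (Set.mem_Iio.mpr i.isLt) (Set.mem_Iio.mpr j.isLt) hij
    have hg : StrictMono (fun i : Fin (p ^ (m+1)) => xx i.val) := fun i j hij =>
      hxxmono (Set.mem_Iio.mpr i.isLt) (Set.mem_Iio.mpr j.isLt) hij
    have e1 : Set.range (fun i : Fin (p ^ (m+1)) => x i.val) = x '' Set.Iio (p ^ (m+1)) := by
      ext y
      constructor
      · rintro ⟨i, rfl⟩; exact ⟨i.val, i.isLt, rfl⟩
      · rintro ⟨k', hk', rfl⟩; exact ⟨⟨k', hk'⟩, rfl⟩
    have e2 : Set.range (fun i : Fin (p ^ (m+1)) => xx i.val) = xx '' Set.Iio (p ^ (m+1)) := by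
      ext y
      constructor
      · rintro ⟨i, rfl⟩; exact ⟨i.val, i.isLt, rfl⟩
      · rintro ⟨k', hk', rfl⟩; exact ⟨⟨k', hk'⟩, rfl⟩
    have hr : Set.range (fun i : Fin (p ^ (m+1)) => x i.val) =
        Set.range (fun i : Fin (p ^ (m+1)) => xx i.val) := by
      rw [e1, e2, hxximg, ← hSx]
    haveI : WellFoundedLT (Fin (p ^ (m+1))) := Finite.to_wellFoundedLT
    have := (hf.range_inj hg).mp hr
    exact congrFun this ⟨k, hk⟩
  -- field facts
  letI : Fintype (GaloisField p (m+1)) := Fintype.ofFinite _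
  have hcardF : Nat.card (GaloisField p (m+1)) = p ^ (m+1) :=
    GaloisField.card p (m+1) (Nat.succ_ne_zero m)
  have hcardF' : Fintype.card (GaloisField p (m+1)) = p ^ (m+1) := by
    rw [← Nat.card_eq_fintype_card, hcardF]
  have horder : orderOf α = p ^ (m+1) - 1 := by
    rw [orderOf_eq_card_of_forall_mem_zpowers hα, Nat.card_units, hcardF]
  have hα0 : (α : GaloisField p (m+1)) ≠ 0 := α.ne_zero
  have hkey : (α : GaloisField p (m+1)) ^ (p ^ (m+1) - 1) = 1 := by
    have h := FiniteField.pow_card_sub_one_eq_one (α : GaloisField p (m+1)) hα0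
    rwa [hcardF'] at h
  have hpowinj : ∀ j1 j2 : ℕ, j1 ≠ 0 → j1 < p ^ (m+1) → j2 ≠ 0 → j2 < p ^ (m+1) →
      (α : GaloisField p (m+1)) ^ j1 = (α : GaloisField p (m+1)) ^ j2 → j1 = j2 := by
    intro j1 j2 h10 h1N h20 h2N heq
    have hu : (α ^ j1 : (GaloisField p (m+1))ˣ) = α ^ j2 :=
      Units.ext (by rw [Units.val_pow_eq_pow_val, Units.val_pow_eq_pow_val]; exact heq)
    have hmodeq : j1 ≡ j2 [MOD orderOf α] := pow_eq_pow_iff_modEq.mp hu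
    rw [horder] at hmodeq
    rcases le_total j1 j2 with h | h
    · have hdvd := (Nat.modEq_iff_dvd' h).mp hmodeq
      rcases Nat.eq_zero_or_pos (j2 - j1) with h0 | hpos
      · omega
      · have := Nat.le_of_dvd hpos hdvd
        omega
    · have hdvd := (Nat.modEq_iff_dvd' h).mp hmodeq.symm
      rcases Nat.eq_zero_or_pos (j1 - j2) with h0 | hpos
      · omega
      · have := Nat.le_of_dvd hpos hdvd
        omega
  have hBval : Set.InjOn B S := by
    intro y1 hy1 y2 hy2 heq
    have hy1' : y1 ∈ x '' Set.Iio (p ^ (m+1)) := by rw [← hSx]; exact hy1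
    have hy2' : y2 ∈ x '' Set.Iio (p ^ (m+1)) := by rw [← hSx]; exact hy2
    obtain ⟨k1, hk1, rfl⟩ := hy1'
    obtain ⟨k2, hk2, rfl⟩ := hy2'
    rw [Set.mem_Iio] at hk1 hk2
    by_cases h10 : piPowI p I (m+1) k1 = 0 <;> by_cases h20 : piPowI p I (m+1) k2 = 0
    · have e1 := hiotapi k1 hk1
      have e2 := hiotapi k2 hk2
      rw [h10] at e1; rw [h20] at e2
      rw [← e1, ← e2]
    · exfalso
      rw [hB0 k1 hk1 h10, hBk k2 hk2 h20] at heq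
      exact pow_ne_zero _ hα0 heq.symm
    · exfalso
      rw [hB0 k2 hk2 h20, hBk k1 hk1 h10] at heq
      exact pow_ne_zero _ hα0 heq
    · rw [hBk k1 hk1 h10, hBk k2 hk2 h20] at heq
      have hj := hpowinj _ _ h10 (hpilt k1 hk1) h20 (hpilt k2 hk2) heq
      have e1 := hiotapi k1 hk1
      have e2 := hiotapi k2 hk2
      rw [← e1, ← e2, hj]
  have hBconj : ∀ k, k < p ^ (m+1) → B (x k) ^ p = B (gpI p I (x k)) := by
    intro k hk
    have hjlt : piPowI p I (m+1) k < p ^ (m+1) := hpilt k hk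
    have hrotlt : BAI.rotL p (m+1) (piPowI p I (m+1) k) < p ^ (m+1) := BAI.rot_lt hp1 hjlt
    have hk'lt : BAI.iota p I (m+1) (BAI.rotL p (m+1) (piPowI p I (m+1) k)) < p ^ (m+1) :=
      BAI.iota_lt (I := I) hp1 _ _ hrotlt
    have hπk' : piPowI p I (m+1) (BAI.iota p I (m+1) (BAI.rotL p (m+1) (piPowI p I (m+1) k))) =
        BAI.rotL p (m+1) (piPowI p I (m+1) k) := BAI.pi_iota (I := I) hp1 _ _ hrotlt
    have hg : gpI p I (x k) = x (BAI.iota p I (m+1) (BAI.rotL p (m+1) (piPowI p I (m+1) k))) := by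
      rw [hxeq k hk, hxeq _ hk'lt]
      show gpI p I (BAI.xst p I (m+1) (piPowI p I (m+1) k)) = _
      rw [hxxdef]
      simp only
      rw [hπk', BAI.mal hp2 hjlt]
    rw [hg]
    by_cases hj0 : piPowI p I (m+1) k = 0
    · rw [hB0 k hk hj0]
      have hz : piPowI p I (m+1) (BAI.iota p I (m+1) (BAI.rotL p (m+1) (piPowI p I (m+1) k))) = 0 := by
        rw [hπk', hj0, BAI.rot_zero]
      rw [hB0 _ hk'lt hz]
      exact zero_pow (by omega : p ≠ 0)
    · have hrot0 : BAI.rotL p (m+1) (piPowI p I (m+1) k) ≠ 0 :=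
        fun h => hj0 (BAI.rot_eq_zero hp1 hjlt h)
      rw [hBk k hk hj0, hBk _ hk'lt (by rw [hπk']; exact hrot0), hπk']
      set j := piPowI p I (m+1) k with hjdef
      have hdm := Nat.div_add_mod j (p ^ m)
      have harith : j * p + j / p ^ m = BAI.rotL p (m+1) j + j / p ^ m * p ^ (m+1) := by
        rw [BAI.rotL_succ]
        zify
        push_cast
        have hdmz : ((p:ℤ)) ^ m * ((j:ℤ) / ((p:ℤ)) ^ m) + (j:ℤ) % ((p:ℤ)) ^ m = (j:ℤ) :=
          Int.mul_ediv_add_emod (j:ℤ) (((p:ℤ)) ^ m)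
        linear_combination (-(p:ℤ)) * hdmz
      have hαN : (α : GaloisField p (m+1)) ^ (p ^ (m+1)) = (α : GaloisField p (m+1)) := by
        calc (α : GaloisField p (m+1)) ^ (p ^ (m+1))
            = (α : GaloisField p (m+1)) ^ ((p ^ (m+1) - 1) + 1) := by congr 1; omega
        _ = (α : GaloisField p (m+1)) := by rw [pow_succ, hkey, one_mul]
      have hcongr : (α : GaloisField p (m+1)) ^ (j * p + j / p ^ m) =
          (α : GaloisField p (m+1)) ^ (BAI.rotL p (m+1) j + j / p ^ m * p ^ (m+1)) := by
        rw [harith]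
      rw [pow_add, pow_add, mul_comm (j / p ^ m) (p ^ (m+1)),
        pow_mul (α : GaloisField p (m+1)) (p ^ (m+1)) (j / p ^ m), hαN] at hcongr
      have hfin := mul_right_cancel₀ (pow_ne_zero _ hα0) hcongr
      rw [← pow_mul]
      exact hfin
  refine ⟨⟨fun y _ => Set.mem_univ _, hBval, ?_⟩, fun k hk => hBconj k hk⟩
  have himgcard : (B '' S).ncard = p ^ (m+1) := by
    rw [Set.ncard_image_of_injOn hBval, hScard]
  have huniv : (Set.univ : Set (GaloisField p (m+1))).ncard = p ^ (m+1) := by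
    rw [Set.ncard_univ, hcardF]
  have heqset : B '' S = Set.univ := by
    apply Set.eq_of_subset_of_ncard_le (Set.subset_univ _)
    rw [himgcard, huniv]
  rw [Set.SurjOn, heqset]
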